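/- Let $(\mathcal{F}_n)_{n\ge 0}$ be a filtration on a probability space and let $(\xi_n)_{n\ge 1}$ be an adapted sequence of random variables taking values in $\{0,1\}$, with $\xi_n$ being $\mathcal{F}_n$-measurable, and set $\theta_n := \mathbb{P}(\xi_n = 1 \mid \mathcal{F}_{n-1})$. Then for any $\delta > 0$, any positive integer $N$, and any constant $\mu > 0$ such that $\sum_{i=1}^N \theta_i \le \mu$ almost surely, the maximal inequality $\mathbb{P}\left(\exists n \in \{1,\dots,N\}: \sum_{i=1}^n \xi_i \ge (1+\delta)\mu\right) \le \exp\left(-\frac{\delta^2}{2+\delta}\mu\right)$ holds (since the $\xi_i$ are nonnegative, the event $\exists n \le N: \sum_{i=1}^n \xi_i \ge (1+\delta)\mu$ coincides with $\sum_{i=1}^N \xi_i \ge (1+\delta)\mu$). -/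

import Mathlib

open MeasureTheory ProbabilityTheory Finset

lemma aux_log_ineq {x : ℝ} (hx : 0 ≤ x) : 2 * x / (2 + x) ≤ Real.log (1 + x) := by
  have h2x : (0:ℝ) < 2 + x := by linarith
  set f : ℝ → ℝ := fun y => (2 + y) * Real.log (1 + y) - 2 * y with hf
  have hderiv : ∀ y : ℝ, 0 < 1 + y →
      HasDerivAt f (Real.log (1 + y) + (2 + y) * (1 + y)⁻¹ - 2) y := by
    intro y hy
    have h1 : HasDerivAt (fun z : ℝ => 1 + z) 1 y := (hasDerivAt_id y).const_add 1
    have hlog : HasDerivAt (fun z : ℝ => Real.log (1 + z)) ((1 + y)⁻¹) y := by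
      have := (Real.hasDerivAt_log (ne_of_gt hy)).comp y h1
      rw [mul_one] at this
      exact this
    have h2 : HasDerivAt (fun z : ℝ => 2 + z) 1 y := (hasDerivAt_id y).const_add 2
    have h3 : HasDerivAt (fun z : ℝ => 2 * z) 2 y := by
      simpa using (hasDerivAt_id y).const_mul 2
    have := (h2.mul hlog).sub h3
    refine this.congr_deriv ?_
    ring
  have hcont : ContinuousOn f (Set.Ici 0) := fun y hy =>
    ((hderiv y (by simp at hy; linarith)).continuousAt).continuousWithinAt
  have hdiff : DifferentiableOn ℝ f (interior (Set.Ici (0:ℝ))) := by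
    rw [interior_Ici]
    exact fun y hy => ((hderiv y (by simp at hy; linarith)).differentiableAt).differentiableWithinAt
  have hnonneg : ∀ y ∈ interior (Set.Ici (0:ℝ)), 0 ≤ deriv f y := by
    rw [interior_Ici]
    intro y hy
    simp only [Set.mem_Ioi] at hy
    have hy1 : (0:ℝ) < 1 + y := by linarith
    rw [(hderiv y hy1).deriv]
    have hlb := Real.one_sub_inv_le_log_of_pos hy1
    have heq : (2 + y) * (1 + y)⁻¹ = 1 + (1 + y)⁻¹ := by
      field_simp
      ring
    rw [heq]
    linarith
  have hmono := monotoneOn_of_deriv_nonneg (convex_Ici 0) hcont hdiff hnonneg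
  have h0 : f 0 = 0 := by simp [hf]
  have hkey : 0 ≤ f x := by
    rw [← h0]
    exact hmono Set.self_mem_Ici hx hx
  rw [div_le_iff₀ h2x]
  simp only [hf] at hkey
  nlinarith [hkey]


/-- maximal form of the martingale multiplicative Chernoff bound: in the setting
of the martingale multiplicative Chernoff bound,
`P(∃ n ∈ {1,…,N} : ∑_{i=1}^n ξ i ≥ (1+δ) μ₀) ≤ exp(-(δ²/(2+δ)) μ₀)`. -/
theorem statement2 {Ω : Type*} {m0 : MeasurableSpace Ω} {μ : Measure Ω}
    [IsProbabilityMeasure μ] (ℱ : Filtration ℕ m0)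
    (ξ θ : ℕ → Ω → ℝ)
    (hadapt : ∀ n, 1 ≤ n → StronglyMeasurable[ℱ n] (ξ n))
    (hval : ∀ n, 1 ≤ n → ∀ ω, ξ n ω = 0 ∨ ξ n ω = 1)
    (hθ : ∀ n, 1 ≤ n → θ n = μ[ξ n|ℱ (n - 1)])
    (δ : ℝ) (hδ : 0 < δ) (N : ℕ) (hN : 1 ≤ N) (μ₀ : ℝ) (hμ₀ : 0 < μ₀)
    (hbound : ∀ᵐ ω ∂μ, ∑ i ∈ Finset.Icc 1 N, θ i ω ≤ μ₀) :
    (μ {ω | ∃ n ∈ Finset.Icc 1 N, (1 + δ) * μ₀ ≤ ∑ i ∈ Finset.Icc 1 n, ξ i ω}).toReal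
      ≤ Real.exp (-(δ ^ 2 / (2 + δ)) * μ₀) := by
  have hδ1 : (0:ℝ) < 1 + δ := by linarith
  set t : ℝ := Real.log (1 + δ) with htdef
  have het : Real.exp t = 1 + δ := Real.exp_log hδ1
  have ht0 : 0 < t := Real.log_pos (by linarith)
  -- basic facts about ξ
  have hξ01 : ∀ n, 1 ≤ n → ∀ ω, 0 ≤ ξ n ω ∧ ξ n ω ≤ 1 := by
    intro n hn ω; rcases hval n hn ω with h | h <;> rw [h] <;> norm_num
  have hξmeas : ∀ n, 1 ≤ n → AEStronglyMeasurable (ξ n) μ :=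
    fun n hn => ((hadapt n hn).mono (ℱ.le n)).aestronglyMeasurable
  have hξint : ∀ n, 1 ≤ n → Integrable (ξ n) μ := by
    intro n hn
    refine (integrable_const (1:ℝ)).mono' (hξmeas n hn) ?_
    filter_upwards with ω
    rw [Real.norm_eq_abs, abs_le]
    exact ⟨by linarith [(hξ01 n hn ω).1], (hξ01 n hn ω).2⟩
  -- θ facts
  have hθmeas : ∀ n, 1 ≤ n → StronglyMeasurable[ℱ (n-1)] (θ n) := by
    intro n hn; rw [hθ n hn]; exact stronglyMeasurable_condExp
  have hθnonneg : ∀ n, 1 ≤ n → ∀ᵐ ω ∂μ, 0 ≤ θ n ω := by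
    intro n hn
    rw [hθ n hn]
    exact condExp_nonneg (Filter.Eventually.of_forall fun ω => (hξ01 n hn ω).1)
  -- sum measurability
  have hSmeas : ∀ n : ℕ, StronglyMeasurable[ℱ n] (fun ω => ∑ i ∈ Finset.Icc 1 n, ξ i ω) := by
    intro n
    apply Finset.stronglyMeasurable_fun_sum
    intro i hi
    rw [Finset.mem_Icc] at hi
    exact (hadapt i hi.1).mono (ℱ.mono hi.2)
  have hTmeas : ∀ n m : ℕ, m ≤ n + 1 →
      StronglyMeasurable[ℱ n] (fun ω => ∑ i ∈ Finset.Icc 1 m, θ i ω) := by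
    intro n m hm
    apply Finset.stronglyMeasurable_fun_sum
    intro i hi
    rw [Finset.mem_Icc] at hi
    exact (hθmeas i hi.1).mono (ℱ.mono (by omega : i - 1 ≤ n))
  -- bounds on partial sums
  have hSbound : ∀ n : ℕ, ∀ ω, 0 ≤ ∑ i ∈ Finset.Icc 1 n, ξ i ω ∧
      ∑ i ∈ Finset.Icc 1 n, ξ i ω ≤ (n : ℝ) := by
    intro n ω
    constructor
    · exact Finset.sum_nonneg fun i hi => (hξ01 i (Finset.mem_Icc.1 hi).1 ω).1
    · calc ∑ i ∈ Finset.Icc 1 n, ξ i ω ≤ ∑ _i ∈ Finset.Icc 1 n, (1:ℝ) :=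
            Finset.sum_le_sum fun i hi => (hξ01 i (Finset.mem_Icc.1 hi).1 ω).2
        _ ≤ (n : ℝ) := by simp [Nat.card_Icc]
  have hTae : ∀ n : ℕ, ∀ᵐ ω ∂μ, 0 ≤ ∑ i ∈ Finset.Icc 1 n, θ i ω := by
    intro n
    have h : ∀ᵐ ω ∂μ, ∀ i : ℕ, i ∈ Finset.Icc 1 n → 0 ≤ θ i ω := by
      rw [MeasureTheory.ae_all_iff]
      intro i
      by_cases hi : i ∈ Finset.Icc 1 n
      · filter_upwards [hθnonneg i (Finset.mem_Icc.1 hi).1] with ω hω _ using hω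
      · filter_upwards with ω h using absurd h hi
    filter_upwards [h] with ω hω using Finset.sum_nonneg hω
  -- the exponential process
  set W : ℕ → Ω → ℝ := fun n ω =>
    Real.exp (t * ∑ i ∈ Finset.Icc 1 n, ξ i ω - δ * ∑ i ∈ Finset.Icc 1 n, θ i ω) with hW
  have hWmeas : ∀ n, StronglyMeasurable[ℱ n] (W n) := by
    intro n
    apply Real.continuous_exp.comp_stronglyMeasurable
    exact (stronglyMeasurable_const.mul (hSmeas n)).sub
      (stronglyMeasurable_const.mul (hTmeas n n (by omega)))
  have hWint : ∀ n, Integrable (W n) μ := by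
    intro n
    refine (integrable_const (Real.exp (t * n))).mono'
      ((hWmeas n).mono (ℱ.le n)).aestronglyMeasurable ?_
    filter_upwards [hTae n] with ω hω
    rw [Real.norm_eq_abs, abs_of_pos (Real.exp_pos _), Real.exp_le_exp]
    have h1 := (hSbound n ω).2
    nlinarith [mul_le_mul_of_nonneg_left h1 ht0.le, mul_nonneg hδ.le hω]
  -- key supermartingale estimate
  have key : ∀ n, ∫ ω, W n ω ∂μ ≤ 1 := by
    intro n
    induction n with
    | zero => simp [hW]
    | succ n ih =>
      set f : Ω → ℝ := fun ω =>
        Real.exp (t * ∑ i ∈ Finset.Icc 1 n, ξ i ω - δ * ∑ i ∈ Finset.Icc 1 (n+1), θ i ω)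
        with hfdef
      set g : Ω → ℝ := fun ω => Real.exp (t * ξ (n+1) ω) with hgdef
      have hsum : ∀ h : ℕ → Ω → ℝ, ∀ ω,
          ∑ i ∈ Finset.Icc 1 (n+1), h i ω = (∑ i ∈ Finset.Icc 1 n, h i ω) + h (n+1) ω :=
        fun h ω => Finset.sum_Icc_succ_top (by omega) _
      have hWfg : ∀ ω, W (n+1) ω = f ω * g ω := by
        intro ω
        simp only [hW, hfdef, hgdef, ← Real.exp_add]
        congr 1
        rw [hsum ξ ω]
        ring
      have hfmeas : StronglyMeasurable[ℱ n] f :=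
        Real.continuous_exp.comp_stronglyMeasurable
          ((stronglyMeasurable_const.mul (hSmeas n)).sub
            (stronglyMeasurable_const.mul (hTmeas n (n+1) le_rfl)))
      have hgmeas : AEStronglyMeasurable g μ :=
        (Real.continuous_exp.comp_stronglyMeasurable
          (stronglyMeasurable_const.mul ((hadapt (n+1) (by omega)).mono
            (ℱ.le (n+1))))).aestronglyMeasurable
      have hgint : Integrable g μ := by
        refine (integrable_const (Real.exp t)).mono' hgmeas ?_
        filter_upwards with ω
        rw [Real.norm_eq_abs, abs_of_pos (Real.exp_pos _), Real.exp_le_exp]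
        nlinarith [(hξ01 (n+1) (by omega) ω).2, ht0.le]
      have hfgint : Integrable (fun ω => f ω * g ω) μ :=
        (hWint (n+1)).congr (Filter.Eventually.of_forall hWfg)
      have hfgint' : Integrable (f * g) μ := hfgint
      -- conditional expectation of g
      have hθn : θ (n+1) = μ[ξ (n+1) | ℱ n] := by
        have := hθ (n+1) (by omega)
        simpa using this
      have hgval : g = (fun _ => (1:ℝ)) + δ • ξ (n+1) := by
        funext ω
        rcases hval (n+1) (by omega) ω with h | h <;>
          simp [hgdef, h, het]
      have hcond : μ[g|ℱ n] =ᵐ[μ] fun ω => 1 + δ * θ (n+1) ω := by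
        rw [hgval]
        refine (condExp_add (integrable_const (1:ℝ))
          ((hξint (n+1) (by omega)).smul δ) (ℱ n)).trans ?_
        have h2 := condExp_smul (m := ℱ n) (μ := μ) δ (ξ (n+1))
        rw [condExp_const (ℱ.le n)]
        filter_upwards [h2] with ω hω2
        simp only [Pi.add_apply, hω2, Pi.smul_apply, smul_eq_mul, hθn]
      -- chain of (in)equalities
      have step1 : ∫ ω, W (n+1) ω ∂μ = ∫ ω, (f * g) ω ∂μ :=
        integral_congr_ae (Filter.Eventually.of_forall hWfg)
      have step2 : ∫ ω, (f * g) ω ∂μ = ∫ ω, (f * μ[g|ℱ n]) ω ∂μ := by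
        rw [← integral_condExp (ℱ.le n) (f := f * g)]
        exact integral_congr_ae (condExp_mul_of_stronglyMeasurable_left hfmeas hfgint' hgint)
      have hlhs_int : Integrable (f * μ[g|ℱ n]) μ :=
        integrable_condExp.congr (condExp_mul_of_stronglyMeasurable_left hfmeas hfgint' hgint)
      have step3 : ∫ ω, (f * μ[g|ℱ n]) ω ∂μ ≤ ∫ ω, W n ω ∂μ := by
        apply integral_mono_ae hlhs_int (hWint n)
        filter_upwards [hcond] with ω hω
        rw [Pi.mul_apply, hω]
        have hle : 1 + δ * θ (n+1) ω ≤ Real.exp (δ * θ (n+1) ω) := by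
          linarith [Real.add_one_le_exp (δ * θ (n+1) ω)]
        calc f ω * (1 + δ * θ (n+1) ω) ≤ f ω * Real.exp (δ * θ (n+1) ω) :=
              mul_le_mul_of_nonneg_left hle (Real.exp_pos _).le
          _ = W n ω := by
              simp only [hfdef, hW, ← Real.exp_add]
              congr 1
              rw [hsum θ ω]
              ring
      calc ∫ ω, W (n+1) ω ∂μ = ∫ ω, (f * μ[g|ℱ n]) ω ∂μ := step1.trans step2
        _ ≤ ∫ ω, W n ω ∂μ := step3
        _ ≤ 1 := ih
  -- reduce the maximal event to the final time
  have hset : {ω | ∃ n ∈ Finset.Icc 1 N, (1 + δ) * μ₀ ≤ ∑ i ∈ Finset.Icc 1 n, ξ i ω}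
      = {ω | (1 + δ) * μ₀ ≤ ∑ i ∈ Finset.Icc 1 N, ξ i ω} := by
    ext ω
    simp only [Set.mem_setOf_eq]
    constructor
    · rintro ⟨n, hn, h⟩
      rw [Finset.mem_Icc] at hn
      refine h.trans (Finset.sum_le_sum_of_subset_of_nonneg
        (Finset.Icc_subset_Icc_right hn.2) ?_)
      intro i hi _
      exact (hξ01 i (Finset.mem_Icc.1 hi).1 ω).1
    · intro h; exact ⟨N, Finset.mem_Icc.2 ⟨hN, le_rfl⟩, h⟩
  set c : ℝ := Real.exp ((t * (1 + δ) - δ) * μ₀) with hc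
  have hc0 : 0 < c := Real.exp_pos _
  have hsub : μ {ω | (1 + δ) * μ₀ ≤ ∑ i ∈ Finset.Icc 1 N, ξ i ω}
      ≤ μ {ω | c ≤ W N ω} := by
    apply measure_mono_ae
    filter_upwards [hbound] with ω hω hmem
    have hmem' : (1 + δ) * μ₀ ≤ ∑ i ∈ Finset.Icc 1 N, ξ i ω := hmem
    show Real.exp ((t * (1 + δ) - δ) * μ₀)
      ≤ Real.exp (t * ∑ i ∈ Finset.Icc 1 N, ξ i ω - δ * ∑ i ∈ Finset.Icc 1 N, θ i ω)
    rw [Real.exp_le_exp]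
    have h1 : t * ((1 + δ) * μ₀) ≤ t * ∑ i ∈ Finset.Icc 1 N, ξ i ω :=
      mul_le_mul_of_nonneg_left hmem' ht0.le
    have h2 : δ * ∑ i ∈ Finset.Icc 1 N, θ i ω ≤ δ * μ₀ :=
      mul_le_mul_of_nonneg_left hω hδ.le
    nlinarith
  have hmark := mul_meas_ge_le_integral_of_nonneg (μ := μ) (f := W N)
      (Filter.Eventually.of_forall fun ω => (Real.exp_pos _).le) (hWint N) c
  have htoReal : (μ {ω | ∃ n ∈ Finset.Icc 1 N, (1 + δ) * μ₀ ≤ ∑ i ∈ Finset.Icc 1 n, ξ i ω}).toReal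
      ≤ (μ {ω | c ≤ W N ω}).toReal := by
    rw [hset]
    exact ENNReal.toReal_mono (measure_ne_top μ _) hsub
  have hfinal : (μ {ω | c ≤ W N ω}).toReal ≤ 1 / c := by
    rw [le_div_iff₀ hc0]
    calc (μ {ω | c ≤ W N ω}).toReal * c = c * (μ {ω | c ≤ W N ω}).toReal := mul_comm _ _
      _ ≤ ∫ ω, W N ω ∂μ := hmark
      _ ≤ 1 := key N
  refine (htoReal.trans hfinal).trans ?_
  have h1c : 1 / c = Real.exp (-((t * (1 + δ) - δ) * μ₀)) := by
    rw [hc, one_div, ← Real.exp_neg]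
  rw [h1c, Real.exp_le_exp]
  have hlog : 2 * δ / (2 + δ) ≤ t := aux_log_ineq hδ.le
  have h2δ : (0:ℝ) < 2 + δ := by linarith
  have hkey : δ ^ 2 / (2 + δ) ≤ t * (1 + δ) - δ := by
    have h1 : (2 * δ / (2 + δ)) * (1 + δ) - δ = δ ^ 2 / (2 + δ) := by
      field_simp
      ring
    nlinarith [mul_le_mul_of_nonneg_right hlog hδ1.le]
  nlinarith [hkey, hμ₀.le]
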